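/- (Optimality of unravelings.) Let q(x) be a CQ and d ≥ 1. If q'(x) is a complete tree-like approximation of q of depth at most d, then q̃_d ⊆ q'; that is, the depth-d unraveling is the best possible complete tree-like approximation of q among all those of depth at most d. -/

import Mathlib

/-!
Formalization of conjunctive queries (CQs) over knowledge graphs, homomorphisms,
paths, valid paths, unravelings, query graphs and tree-likeness, following the
paper "Approximate Answering of Graph Queries" setting.
-/

namespace KGQuery

/-- Constants: a countably infinite set. -/
abbrev Con : Type := ℕ

/-- Variables: a countably infinite set (disjoint from the constants via `Term`). -/
abbrev Var : Type := ℕ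

/-- Terms are variables or constants. -/
inductive Term : Type
  | var : Var → Term
  | con : Con → Term
deriving DecidableEq

/-- An atom `R(y, z)` with `y, z` terms. -/
structure Atom (Rel : Type) : Type where
  rel : Rel
  src : Term
  tgt : Term
deriving DecidableEq

/-- A fact `R(a, b)` with `a, b` constants. -/
structure Fact (Rel : Type) : Type where
  rel : Rel
  src : Con
  tgt : Con
deriving DecidableEq

/-- A knowledge graph: a finite set of facts. -/
abbrev KG (Rel : Type) : Type := Finset (Fact Rel)

/-- A (unary) conjunctive query: a finite nonempty set of atoms in which the
target variable occurs. -/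
structure CQ (Rel : Type) : Type where
  target : Var
  atoms : Finset (Atom Rel)
  atoms_nonempty : atoms.Nonempty
  target_occurs : ∃ A ∈ atoms, A.src = Term.var target ∨ A.tgt = Term.var target

variable {Rel : Type}

/-- The terms occurring in the atoms of a CQ. -/
def CQ.terms (q : CQ Rel) : Set Term :=
  {t | ∃ A ∈ q.atoms, A.src = t ∨ A.tgt = t}

/-- `Var(q)`: the variables occurring in `q`. -/
def CQ.vars (q : CQ Rel) : Set Var := {v | Term.var v ∈ q.terms}

/-- `Con(q)`: the constants occurring in `q`. -/
def CQ.cons (q : CQ Rel) : Set Con := {c | Term.con c ∈ q.terms}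

/-- The answer `q(G)` of a CQ `q` over a knowledge graph `G`: the set of constants
`a` such that some assignment `μ` fixing the constants of `q` maps the target
variable to `a` and every atom of `q` to a fact of `G`. -/
def CQ.answer (q : CQ Rel) (G : KG Rel) : Set Con :=
  {a | ∃ μ : Term → Con,
    (∀ c ∈ q.cons, μ (Term.con c) = c) ∧
    μ (Term.var q.target) = a ∧
    ∀ A ∈ q.atoms, (⟨A.rel, μ A.src, μ A.tgt⟩ : Fact Rel) ∈ G}

/-- Containment `q ⊆ q'`: the answers of `q` are contained in those of `q'`
over every knowledge graph. -/
def CQ.contained (q q' : CQ Rel) : Prop :=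
  ∀ G : KG Rel, q.answer G ⊆ q'.answer G

/-- A homomorphism from `q` to `q'`: maps the target variable of `q` to the target
variable of `q'`, fixes the constants of `q`, and maps every atom of `q` to an
atom of `q'`. -/
def IsHom (q q' : CQ Rel) (h : Term → Term) : Prop :=
  h (Term.var q.target) = Term.var q'.target ∧
  (∀ c ∈ q.cons, h (Term.con c) = Term.con c) ∧
  ∀ A ∈ q.atoms, (⟨A.rel, h A.src, h A.tgt⟩ : Atom Rel) ∈ q'.atoms

/-! ### The canonical database -/

/-- Replace variables by constants using `ι`. -/
def termToCon (ι : Var → Con) : Term → Con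
  | Term.var v => ι v
  | Term.con c => c

/-- The canonical database of `q`: the knowledge graph obtained from the atoms of
`q` by replacing each variable `v` by the constant `ι v`. -/
def canonicalDB [DecidableEq Rel] (q : CQ Rel) (ι : Var → Con) : KG Rel :=
  q.atoms.image (fun A => ⟨A.rel, termToCon ι A.src, termToCon ι A.tgt⟩)

/-! ### Paths and valid paths -/

/-- The atom `A` is traversed from `u` to `v`: forward (`A = R(u,v)`) or
backward (`A = R(v,u)`). -/
def Traverses (A : Atom Rel) (u v : Term) : Prop :=
  (A.src = u ∧ A.tgt = v) ∨ (A.src = v ∧ A.tgt = u)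

/-- A path starting at the term `u`, encoded as its list of steps `(Aᵢ, xᵢ)`:
each atom `Aᵢ` belongs to `q` and is traversed from `xᵢ₋₁` to `xᵢ`. -/
def IsPathFrom (q : CQ Rel) : Term → List (Atom Rel × Term) → Prop
  | _, [] => True
  | u, (A, v) :: rest => A ∈ q.atoms ∧ Traverses A u v ∧ IsPathFrom q v rest

/-- A path of `q(x)`: a path starting at the target variable `x`.
The path `x₀, A₁, x₁, …, A_k, x_k` is encoded as the list `[(A₁,x₁),…,(A_k,x_k)]`,
whose length `k` is the length of the path. -/
def IsPath (q : CQ Rel) (P : List (Atom Rel × Term)) : Prop :=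
  IsPathFrom q (Term.var q.target) P

/-- The end of a path (the target variable for the path of length `0`). -/
def pathEnd (q : CQ Rel) (P : List (Atom Rel × Term)) : Term :=
  match P.getLast? with
  | none => Term.var q.target
  | some s => s.2

/-- Validity: no two consecutive steps traverse the same atom. -/
def IsValid (P : List (Atom Rel × Term)) : Prop :=
  (P.map Prod.fst).Chain' (· ≠ ·)

/-- A valid path of `q`. -/
def IsValidPath (q : CQ Rel) (P : List (Atom Rel × Term)) : Prop :=
  IsPath q P ∧ IsValid P

/-- A path is unanchored if it ends at a variable (anchored if it ends at a
constant). -/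
def Unanchored (q : CQ Rel) (P : List (Atom Rel × Term)) : Prop :=
  ∃ v : Var, pathEnd q P = Term.var v

/-! ### Unravelings -/

/-- The term `o_P` of the unraveling associated to a valid path `P`: the fresh
variable `z_P = enc P` if `P` is unanchored, and the constant `end(P)` otherwise. -/
def oTerm (q : CQ Rel) (enc : List (Atom Rel × Term) → Var)
    (P : List (Atom Rel × Term)) : Term :=
  match pathEnd q P with
  | Term.var _ => Term.var (enc P)
  | Term.con c => Term.con c

/-- The set of atoms of the unraveling `q̃_d` of `q`: for every valid path
`P' = P, A', end(P')` of length at most `d`, the atom `R(o_P, o_{P'})` if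
`A' = R(end(P), end(P'))`, and the atom `R(o_{P'}, o_P)` if
`A' = R(end(P'), end(P))`. -/
def UnravelAtoms (q : CQ Rel) (enc : List (Atom Rel × Term) → Var) (d : ℕ) :
    Set (Atom Rel) :=
  {B | ∃ (P : List (Atom Rel × Term)) (A' : Atom Rel) (t' : Term),
    IsValidPath q (P ++ [(A', t')]) ∧ P.length + 1 ≤ d ∧
    ((A'.src = pathEnd q P ∧ A'.tgt = t' ∧
        B = ⟨A'.rel, oTerm q enc P, oTerm q enc (P ++ [(A', t')])⟩) ∨
     (A'.src = t' ∧ A'.tgt = pathEnd q P ∧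
        B = ⟨A'.rel, oTerm q enc (P ++ [(A', t')]), oTerm q enc P⟩))}

/-- `qd` is (a presentation of) the unraveling `q̃_d` of `q`, where the injective
map `enc` provides the distinct fresh variables `z_P` indexing the unanchored
valid paths: its target variable is `z_{P₀} = enc []` and its atoms are exactly
the unraveling atoms. -/
def IsUnraveling (q : CQ Rel) (enc : List (Atom Rel × Term) → Var) (d : ℕ)
    (qd : CQ Rel) : Prop :=
  Function.Injective enc ∧ qd.target = enc [] ∧
    (↑qd.atoms : Set (Atom Rel)) = UnravelAtoms q enc d

/-! ### Query graphs and tree-likeness -/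

/-- Nodes of the query graph of a CQ: either a variable, or an occurrence of a
constant in an atom (`false` = source position, `true` = target position). -/
abbrev QNode (Rel : Type) : Type := Var ⊕ (Atom Rel × Bool)

/-- The term at position `b` of an atom. -/
def Atom.pos (A : Atom Rel) (b : Bool) : Term := cond b A.tgt A.src

/-- The node of the query graph corresponding to position `b` of atom `A`:
the variable itself, or the occurrence node for a constant. -/
def endpointNode (A : Atom Rel) (b : Bool) : QNode Rel :=
  match A.pos b with
  | Term.var v => Sum.inl v
  | Term.con _ => Sum.inr (A, b)

/-- The node set of the query graph of `q`: the variables of `q` together with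
one node per occurrence of a constant in an atom of `q`. -/
def nodeSet (q : CQ Rel) : Set (QNode Rel) :=
  (Sum.inl '' q.vars) ∪
    {n | ∃ A ∈ q.atoms, ∃ b : Bool, (∃ c : Con, A.pos b = Term.con c) ∧
      n = Sum.inr (A, b)}

/-- Adjacency in the query graph of `q`: one (undirected) edge per atom. -/
def Adj (q : CQ Rel) (m n : QNode Rel) : Prop :=
  ∃ A ∈ q.atoms,
    (m = endpointNode A false ∧ n = endpointNode A true) ∨
    (m = endpointNode A true ∧ n = endpointNode A false)

/-- The root of the query graph of a CQ: its target variable. -/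
def rootNode (q : CQ Rel) : QNode Rel := Sum.inl q.target

/-- `q` is tree-like: its query graph is a tree rooted at the target variable,
i.e. every node is connected to the root and the number of edges (= atoms) is one
less than the number of nodes. -/
def IsTreeLike (q : CQ Rel) : Prop :=
  (∀ n ∈ nodeSet q, Relation.ReflTransGen (Adj q) (rootNode q) n) ∧
  (nodeSet q).ncard = q.atoms.card + 1

/-- Reachability in at most `d` steps of a relation. -/
def ReachIn {α : Type*} (r : α → α → Prop) : ℕ → α → α → Prop
  | 0, a, b => a = b
  | n + 1, a, b => a = b ∨ ∃ c, r a c ∧ ReachIn r n c b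

/-- The (rooted) query graph of `q` has depth at most `d`: every node is within
distance `d` of the root. -/
def HasDepthLE (q : CQ Rel) (d : ℕ) : Prop :=
  ∀ n ∈ nodeSet q, ReachIn (Adj q) d (rootNode q) n

/-- The depth of (the query graph of) a tree-like CQ: the length of the longest
path from the root to a node. -/
noncomputable def depth (q : CQ Rel) : ℕ := sInf {d : ℕ | HasDepthLE q d}

/-! ### Reduction of paths to valid paths -/

/-- One step of reduction: replace a subsequence `y, A, z, A, y` by `y`. -/
def PathReduce (q : CQ Rel) (P Q : List (Atom Rel × Term)) : Prop :=
  ∃ (L1 : List (Atom Rel × Term)) (A : Atom Rel) (z y : Term)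
    (L2 : List (Atom Rel × Term)),
    pathEnd q L1 = y ∧ P = L1 ++ (A, z) :: (A, y) :: L2 ∧ Q = L1 ++ L2

/-- Append one step to an already valid path, cancelling a backtracking step. -/
def validAppend [DecidableEq Rel] (P : List (Atom Rel × Term))
    (s : Atom Rel × Term) : List (Atom Rel × Term) :=
  match P.getLast? with
  | none => [s]
  | some t => if t.1 = s.1 then P.dropLast else P ++ [s]

/-- `valid(P)`: the unique valid path obtained from the path `P` by iteratively
replacing subsequences of the form `y, A, z, A, y` by `y`. -/
def validify [DecidableEq Rel] (P : List (Atom Rel × Term)) :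
    List (Atom Rel × Term) :=
  P.foldl validAppend []

/-- The image of an atom under a map on terms. -/
def Atom.mapTerms (h : Term → Term) (A : Atom Rel) : Atom Rel :=
  ⟨A.rel, h A.src, h A.tgt⟩

/-- The image under `h` of a path: apply `h` to every element and every atom. -/
def mapPath (h : Term → Term) (P : List (Atom Rel × Term)) :
    List (Atom Rel × Term) :=
  P.map (fun s => (s.1.mapTerms h, h s.2))

end KGQuery

namespace KGQuery

/-! ### Auxiliary machinery for the proof -/

variable {Rel : Type}

/-- End of a path starting at `x`. -/
def endAux (x : Term) (P : List (Atom Rel × Term)) : Term :=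
  match P.getLast? with
  | none => x
  | some s => s.2

lemma pathEnd_eq (q : CQ Rel) (P : List (Atom Rel × Term)) :
    pathEnd q P = endAux (Term.var q.target) P := rfl

lemma endAux_nil (x : Term) : endAux x ([] : List (Atom Rel × Term)) = x := rfl

lemma endAux_concat (x : Term) (P : List (Atom Rel × Term)) (s : Atom Rel × Term) :
    endAux x (P ++ [s]) = s.2 := by
  simp [endAux, List.getLast?_concat]

lemma endAux_cons (x v : Term) (B : Atom Rel) (rest : List (Atom Rel × Term)) :
    endAux x ((B, v) :: rest) = endAux v rest := by
  cases rest with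
  | nil => rfl
  | cons t ts =>
    unfold endAux
    rw [List.getLast?_cons_cons]
    cases h : (t :: ts).getLast? with
    | none => simp at h
    | some s => rfl

lemma isPathFrom_concat {q : CQ Rel} {x : Term} {P : List (Atom Rel × Term)}
    {A : Atom Rel} {e : Term} :
    IsPathFrom q x (P ++ [(A, e)]) ↔
      IsPathFrom q x P ∧ A ∈ q.atoms ∧ Traverses A (endAux x P) e := by
  induction P generalizing x with
  | nil =>
    show (A ∈ q.atoms ∧ Traverses A x e ∧ True) ↔ True ∧ A ∈ q.atoms ∧ Traverses A (endAux x []) e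
    rw [endAux_nil]
    tauto
  | cons s rest ih =>
    obtain ⟨B, v⟩ := s
    rw [List.cons_append]
    show (B ∈ q.atoms ∧ Traverses B x v ∧ IsPathFrom q v (rest ++ [(A, e)])) ↔
      (B ∈ q.atoms ∧ Traverses B x v ∧ IsPathFrom q v rest) ∧ _ ∧ _
    rw [ih, endAux_cons]
    tauto

lemma traverses_right_unique {A : Atom Rel} {w' u w : Term}
    (h1 : Traverses A w' u) (h2 : Traverses A u w) : w = w' := by
  rcases h1 with ⟨e1, e2⟩ | ⟨e1, e2⟩ <;> rcases h2 with ⟨f1, f2⟩ | ⟨f1, f2⟩ <;>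
    subst_vars <;> simp_all

lemma validAppend_spec [DecidableEq Rel] {q : CQ Rel} {V : List (Atom Rel × Term)}
    (hV : IsValidPath q V) {B : Atom Rel} (hB : B ∈ q.atoms) {w : Term}
    (hT : Traverses B (pathEnd q V) w) :
    IsValidPath q (validAppend V (B, w)) ∧ pathEnd q (validAppend V (B, w)) = w ∧
      (validAppend V (B, w) = V ++ [(B, w)] ∨
        V = validAppend V (B, w) ++ [(B, pathEnd q V)]) := by
  obtain ⟨hP, hVal⟩ := hV
  rcases List.eq_nil_or_concat' V with rfl | ⟨L, t, rfl⟩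
  · have hva : validAppend ([] : List (Atom Rel × Term)) (B, w) = [(B, w)] := rfl
    rw [hva]
    refine ⟨⟨⟨hB, hT, trivial⟩, ?_⟩, rfl, Or.inl rfl⟩
    simp [IsValid, List.Chain']
  · obtain ⟨tA, te⟩ := t
    have hend : pathEnd q (L ++ [(tA, te)]) = te := by
      rw [pathEnd_eq, endAux_concat]
    have hsplit := isPathFrom_concat.mp hP
    rw [hend] at hT
    by_cases hA : tA = B
    · subst hA
      have hva : validAppend (L ++ [(tA, te)]) (tA, w) = L := by
        unfold validAppend
        rw [List.getLast?_concat]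
        simp
      rw [hva]
      have hw : w = endAux (Term.var q.target) L :=
        traverses_right_unique hsplit.2.2 hT
      refine ⟨⟨hsplit.1, ?_⟩, ?_, Or.inr ?_⟩
      · exact hVal.prefix (by simp)
      · rw [pathEnd_eq, hw]
      · rw [hend]
    · have hva : validAppend (L ++ [(tA, te)]) (B, w) = (L ++ [(tA, te)]) ++ [(B, w)] := by
        unfold validAppend
        rw [List.getLast?_concat]
        simp [hA]
      rw [hva]
      refine ⟨⟨?_, ?_⟩, ?_, Or.inl rfl⟩
      · exact isPathFrom_concat.mpr ⟨hP, hB, by rw [← pathEnd_eq, hend]; exact hT⟩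
      · show ((L ++ [(tA, te)] ++ [(B, w)]).map Prod.fst).Chain' (· ≠ ·)
        unfold List.Chain'
        rw [List.map_append, List.isChain_append]
        refine ⟨hVal, by simp, ?_⟩
        intro x hx y hy
        simp only [List.map_append, List.map_cons, List.map_nil] at hx
        rw [List.getLast?_concat] at hx
        simp only [List.map_cons, List.head?_cons, Option.mem_def, Option.some.injEq] at hx hy
        subst hx; subst hy
        exact hA
      · rw [pathEnd_eq, endAux_concat]

lemma reachIn_succ {α : Type*} {r : α → α → Prop} {k : ℕ} {a b : α}
    (h : ReachIn r k a b) : ReachIn r (k + 1) a b := by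
  induction k generalizing a with
  | zero => exact Or.inl h
  | succ m ih =>
    rcases h with rfl | ⟨c, h1, h2⟩
    · exact Or.inl rfl
    · exact Or.inr ⟨c, h1, ih h2⟩

lemma reachIn_le {α : Type*} {r : α → α → Prop} {k m : ℕ} {a b : α}
    (h : ReachIn r k a b) (hkm : k ≤ m) : ReachIn r m a b := by
  induction hkm with
  | refl => exact h
  | step _ ih => exact reachIn_succ ih

lemma reachIn_refl {α : Type*} {r : α → α → Prop} : ∀ (k : ℕ) (b : α), ReachIn r k b b
  | 0, _ => rfl
  | _ + 1, _ => Or.inl rfl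

lemma reachIn_concat {α : Type*} {r : α → α → Prop} {k : ℕ} {a c b : α}
    (h : ReachIn r k a c) (hcb : r c b) : ReachIn r (k + 1) a b := by
  induction k generalizing a with
  | zero => exact Or.inr ⟨b, h ▸ hcb, rfl⟩
  | succ m ih =>
    rcases h with rfl | ⟨m', h1, h2⟩
    · exact Or.inr ⟨b, hcb, reachIn_refl (m + 1) b⟩
    · exact Or.inr ⟨m', h1, ih h2⟩

lemma reachIn_symm {α : Type*} {r : α → α → Prop} (hr : ∀ x y, r x y → r y x) :
    ∀ {k : ℕ} {a b : α}, ReachIn r k a b → ReachIn r k b a := by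
  intro k
  induction k with
  | zero => intro a b h; exact h.symm
  | succ m ih =>
    rintro a b (rfl | ⟨c, h1, h2⟩)
    · exact Or.inl rfl
    · exact reachIn_concat (ih h2) (hr _ _ h1)

/-- Iterated construction of the canonical valid path to a node. -/
def buildV [DecidableEq Rel] (root : QNode Rel) (par : QNode Rel → QNode Rel)
    (stepOf : QNode Rel → Atom Rel × Term) : ℕ → QNode Rel → List (Atom Rel × Term)
  | 0, _ => []
  | k + 1, n =>
      if n = root then [] else validAppend (buildV root par stepOf k (par n)) (stepOf n)

/-- The term of a node of the query graph. -/
def nodeTerm : QNode Rel → Term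
  | Sum.inl v => Term.var v
  | Sum.inr (A, b) => A.pos b

lemma nodeTerm_endpointNode (A : Atom Rel) (b : Bool) :
    nodeTerm (endpointNode A b) = A.pos b := by
  unfold endpointNode
  split <;> simp_all [nodeTerm]

lemma endpointNode_eq_inl {A : Atom Rel} {b : Bool} {v : Var}
    (h : A.pos b = Term.var v) : endpointNode A b = Sum.inl v := by
  unfold endpointNode
  split <;> simp_all

lemma endpointNode_eq_inr {A : Atom Rel} {b : Bool} {c : Con}
    (h : A.pos b = Term.con c) : endpointNode A b = Sum.inr (A, b) := by
  unfold endpointNode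
  split <;> simp_all

lemma endpoint_mem_nodeSet {q : CQ Rel} {A : Atom Rel} (hA : A ∈ q.atoms) (b : Bool) :
    endpointNode A b ∈ nodeSet q := by
  rcases hpos : A.pos b with v | c
  · rw [endpointNode_eq_inl hpos]
    left
    refine ⟨v, ⟨A, hA, ?_⟩, rfl⟩
    cases b
    · exact Or.inl hpos
    · exact Or.inr hpos
  · rw [endpointNode_eq_inr hpos]
    right
    exact ⟨A, hA, b, ⟨c, hpos⟩, rfl⟩

lemma mem_nodeSet_var {q : CQ Rel} {n : QNode Rel} {v : Var}
    (hn : n ∈ nodeSet q) (hv : nodeTerm n = Term.var v) : n = Sum.inl v := by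
  rcases n with w | ⟨A, b⟩
  · simp only [nodeTerm, Term.var.injEq] at hv
    rw [hv]
  · exfalso
    rcases hn with ⟨w, _, hw⟩ | ⟨A', _, b', ⟨c, hc⟩, heq⟩
    · exact absurd hw (by simp)
    · rw [Sum.inr.injEq, Prod.mk.injEq] at heq
      obtain ⟨h1, h2⟩ := heq
      rw [show nodeTerm (Sum.inr (A, b)) = A.pos b from rfl, h1, h2, hc] at hv
      simp at hv

lemma mem_nodeSet_con {q : CQ Rel} {n : QNode Rel} {c : Con}
    (hn : n ∈ nodeSet q) (hc : nodeTerm n = Term.con c) : c ∈ q.cons := by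
  rcases n with w | ⟨A, b⟩
  · exact absurd hc (by simp [nodeTerm])
  · rcases hn with ⟨w, _, hw⟩ | ⟨A', hA', b', _, heq⟩
    · exact absurd hw (by simp)
    · rw [Sum.inr.injEq, Prod.mk.injEq] at heq
      obtain ⟨h1, h2⟩ := heq
      refine ⟨A', hA', ?_⟩
      rw [show nodeTerm (Sum.inr (A, b)) = A.pos b from rfl, h1, h2] at hc
      cases b'
      · exact Or.inl hc
      · exact Or.inr hc

lemma root_mem_nodeSet (q : CQ Rel) : rootNode q ∈ nodeSet q :=
  Or.inl ⟨q.target, q.target_occurs, rfl⟩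


lemma reachIn_zero_iff {α : Type*} {r : α → α → Prop} {a b : α} :
    ReachIn r 0 a b ↔ a = b := Iff.rfl

lemma reachIn_succ_iff {α : Type*} {r : α → α → Prop} {k : ℕ} {a b : α} :
    ReachIn r (k + 1) a b ↔ a = b ∨ ∃ c, r a c ∧ ReachIn r k c b := Iff.rfl

/-- Constants occurring in a term, as a finset. -/
def termCons : Term → Finset ℕ
  | Term.var _ => ∅
  | Term.con c => {c}

lemma cons_lt_bound [DecidableEq Rel] (r : CQ Rel) :
    ∃ B : ℕ, ∀ c ∈ r.cons, c < B := by
  refine ⟨(r.atoms.biUnion fun A => termCons A.src ∪ termCons A.tgt).sup id + 1, ?_⟩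
  intro c hc
  obtain ⟨A, hA, hor⟩ := hc
  have hmem : c ∈ r.atoms.biUnion fun A => termCons A.src ∪ termCons A.tgt := by
    refine Finset.mem_biUnion.mpr ⟨A, hA, ?_⟩
    rcases hor with h1 | h1
    · exact Finset.mem_union_left _ (by rw [h1]; simp [termCons])
    · exact Finset.mem_union_right _ (by rw [h1]; simp [termCons])
  have := Finset.le_sup (f := id) hmem
  simp only [id_eq] at this
  exact Nat.lt_succ_of_le this

lemma traverses_of_orient {A : Atom Rel} {n p : QNode Rel}
    (hor : (n = endpointNode A false ∧ p = endpointNode A true) ∨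
      (n = endpointNode A true ∧ p = endpointNode A false)) :
    Traverses A (nodeTerm p) (nodeTerm n) := by
  rcases hor with ⟨h1, h2⟩ | ⟨h1, h2⟩ <;> subst h1 <;> subst h2 <;>
    rw [nodeTerm_endpointNode, nodeTerm_endpointNode]
  · exact Or.inr ⟨rfl, rfl⟩
  · exact Or.inl ⟨rfl, rfl⟩

/-- From a homomorphism `h : q' → q` and tree-likeness of `q'` of depth at most
`d`, produce a homomorphism from `q'` into the depth-`d` unraveling of `q`. -/
lemma tree_hom [DecidableEq Rel] (q q' : CQ Rel) (d : ℕ)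
    (enc : List (Atom Rel × Term) → Var) (h : Term → Term)
    (hTgt : h (Term.var q'.target) = Term.var q.target)
    (hCons : ∀ c ∈ q'.cons, h (Term.con c) = Term.con c)
    (hAtoms : ∀ A ∈ q'.atoms, A.mapTerms h ∈ q.atoms)
    (htree : IsTreeLike q') (hdep : HasDepthLE q' d) :
    ∃ g : Term → Term,
      g (Term.var q'.target) = Term.var (enc []) ∧
      (∀ c : Con, g (Term.con c) = Term.con c) ∧
      ∀ A ∈ q'.atoms, (⟨A.rel, g A.src, g A.tgt⟩ : Atom Rel) ∈ UnravelAtoms q enc d := by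
  classical
  obtain ⟨-, hcard⟩ := htree
  -- distance to the root and parent structure
  have hkey : ∃ dist : QNode Rel → ℕ,
      dist (rootNode q') = 0 ∧
      (∀ n ∈ nodeSet q', dist n ≤ d) ∧
      (∀ n ∈ nodeSet q', dist n = 0 → n = rootNode q') ∧
      (∀ n ∈ nodeSet q', n ≠ rootNode q' → ∃ (A : Atom Rel) (p : QNode Rel),
        A ∈ q'.atoms ∧ p ∈ nodeSet q' ∧ dist p + 1 = dist n ∧
        ((n = endpointNode A false ∧ p = endpointNode A true) ∨
         (n = endpointNode A true ∧ p = endpointNode A false))) := by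
    have hAdjSymm : ∀ x y, Adj q' x y → Adj q' y x := by
      rintro x y ⟨A, hA, (⟨h1, h2⟩ | ⟨h1, h2⟩)⟩
      exacts [⟨A, hA, Or.inr ⟨h2, h1⟩⟩, ⟨A, hA, Or.inl ⟨h2, h1⟩⟩]
    refine ⟨fun n => sInf {k | ReachIn (Adj q') k n (rootNode q')}, ?_, ?_, ?_, ?_⟩
    · refine Nat.sInf_eq_zero.mpr (Or.inl ?_)
      exact reachIn_refl (r := Adj q') 0 (rootNode q')
    · intro n hn
      exact Nat.sInf_le (reachIn_symm hAdjSymm (hdep n hn))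
    · intro n hn h0
      have hmem := Nat.sInf_mem (⟨d, reachIn_symm hAdjSymm (hdep n hn)⟩ :
        {k | ReachIn (Adj q') k n (rootNode q')}.Nonempty)
      replace h0 : sInf {k | ReachIn (Adj q') k n (rootNode q')} = 0 := h0
      rw [h0] at hmem
      exact hmem
    · intro n hn hnr
      have hne : {k | ReachIn (Adj q') k n (rootNode q')}.Nonempty :=
        ⟨d, reachIn_symm hAdjSymm (hdep n hn)⟩
      have hre : ReachIn (Adj q') (sInf {k | ReachIn (Adj q') k n (rootNode q')})
          n (rootNode q') := Nat.sInf_mem hne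
      have hdn0 : sInf {k | ReachIn (Adj q') k n (rootNode q')} ≠ 0 := by
        intro h0; rw [h0] at hre; exact hnr hre
      obtain ⟨m, hm⟩ : ∃ m, sInf {k | ReachIn (Adj q') k n (rootNode q')} = m + 1 :=
        ⟨sInf {k | ReachIn (Adj q') k n (rootNode q')} - 1, by omega⟩
      rw [hm, reachIn_succ_iff] at hre
      rcases hre with heq | ⟨p, hadj, hp⟩
      · exact absurd heq hnr
      obtain ⟨A, hA, hor⟩ := hadj
      have hpN : p ∈ nodeSet q' := by
        rcases hor with ⟨_, h2⟩ | ⟨_, h2⟩ <;> rw [h2] <;> exact endpoint_mem_nodeSet hA _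
      refine ⟨A, p, hA, hpN, ?_, hor⟩
      have h1 : sInf {k | ReachIn (Adj q') k p (rootNode q')} ≤ m := Nat.sInf_le hp
      have h2 : sInf {k | ReachIn (Adj q') k n (rootNode q')} ≤
          sInf {k | ReachIn (Adj q') k p (rootNode q')} + 1 :=
        Nat.sInf_le (reachIn_succ_iff.mpr (Or.inr ⟨p, ⟨A, hA, hor⟩, Nat.sInf_mem (⟨m, hp⟩ : {k | ReachIn (Adj q') k p (rootNode q')}.Nonempty)⟩))
      show sInf {k | ReachIn (Adj q') k p (rootNode q')} + 1 =
        sInf {k | ReachIn (Adj q') k n (rootNode q')}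
      omega
  obtain ⟨dist, hdistRoot, hdistLe, hdist0, hparent0⟩ := hkey
  -- choose parents
  have hparent1 : ∀ n : QNode Rel, ∃ (A : Atom Rel) (p : QNode Rel),
      n ∈ nodeSet q' → n ≠ rootNode q' →
        A ∈ q'.atoms ∧ p ∈ nodeSet q' ∧ dist p + 1 = dist n ∧
        ((n = endpointNode A false ∧ p = endpointNode A true) ∨
         (n = endpointNode A true ∧ p = endpointNode A false)) := by
    intro n
    by_cases hc : n ∈ nodeSet q' ∧ n ≠ rootNode q'
    · obtain ⟨A, p, hs⟩ := hparent0 n hc.1 hc.2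
      exact ⟨A, p, fun _ _ => hs⟩
    · exact ⟨q'.atoms_nonempty.choose, rootNode q', fun h1 h2 => absurd ⟨h1, h2⟩ hc⟩
  choose pA pP hPspec using hparent1
  -- the canonical valid path of each node
  have hVex : ∃ V : QNode Rel → List (Atom Rel × Term),
      V (rootNode q') = [] ∧
      ∀ n ∈ nodeSet q', n ≠ rootNode q' →
        V n = validAppend (V (pP n)) ((pA n).mapTerms h, h (nodeTerm n)) := by
    refine ⟨fun n => buildV (rootNode q') pP
      (fun m => ((pA m).mapTerms h, h (nodeTerm m))) (dist n) n, ?_, ?_⟩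
    · show buildV _ _ _ (dist (rootNode q')) _ = []
      rw [hdistRoot]
      rfl
    · intro n hn hnr
      obtain ⟨-, -, hdp, -⟩ := hPspec n hn hnr
      show buildV _ _ _ (dist n) n = _
      rw [← hdp]
      simp only [buildV]
      rw [if_neg hnr]
  obtain ⟨V, hVroot, hVstep⟩ := hVex
  -- the step traverses correctly
  have hTravGen : ∀ n, n ∈ nodeSet q' → n ≠ rootNode q' →
      Traverses ((pA n).mapTerms h) (h (nodeTerm (pP n))) (h (nodeTerm n)) := by
    intro n hn hnr
    obtain ⟨hA, -, -, hor⟩ := hPspec n hn hnr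
    have htr : Traverses (pA n) (nodeTerm (pP n)) (nodeTerm n) := traverses_of_orient hor
    rcases htr with ⟨h1, h2⟩ | ⟨h1, h2⟩
    · exact Or.inl ⟨congrArg h h1, congrArg h h2⟩
    · exact Or.inr ⟨congrArg h h1, congrArg h h2⟩
  -- main invariant
  have hMain : ∀ k, ∀ n ∈ nodeSet q', dist n ≤ k →
      IsValidPath q (V n) ∧ pathEnd q (V n) = h (nodeTerm n) ∧ (V n).length ≤ dist n := by
    intro k
    induction k with
    | zero =>
      intro n hn hdk
      have h0 : dist n = 0 := Nat.le_zero.mp hdk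
      have hnr : n = rootNode q' := hdist0 n hn h0
      subst hnr
      rw [hVroot]
      refine ⟨⟨trivial, List.isChain_nil⟩, hTgt.symm, by simp⟩
    | succ m ih =>
      intro n hn hdk
      by_cases hle : dist n ≤ m
      · exact ih n hn hle
      have hnr : n ≠ rootNode q' := by
        intro hr; rw [hr, hdistRoot] at hle; exact hle (Nat.zero_le m)
      obtain ⟨hpA, hpN, hdp, hor⟩ := hPspec n hn hnr
      obtain ⟨hVp, hVpEnd, hVpLen⟩ := ih (pP n) hpN (by omega)
      have hTrav : Traverses ((pA n).mapTerms h) (pathEnd q (V (pP n))) (h (nodeTerm n)) := by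
        rw [hVpEnd]; exact hTravGen n hn hnr
      have hspec := validAppend_spec hVp (hAtoms _ hpA) hTrav
      rw [hVstep n hn hnr]
      refine ⟨hspec.1, hspec.2.1, ?_⟩
      rcases hspec.2.2 with heq | heq
      · rw [heq]
        simp only [List.length_append, List.length_cons, List.length_nil]
        omega
      · have hlen := congrArg List.length heq
        simp only [List.length_append, List.length_cons, List.length_nil] at hlen
        omega
  have hInv : ∀ n ∈ nodeSet q',
      IsValidPath q (V n) ∧ pathEnd q (V n) = h (nodeTerm n) ∧ (V n).length ≤ dist n :=
    fun n hn => hMain (dist n) n hn le_rfl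
  -- counting: every atom is the parent atom of a unique non-root node
  have hNfin : (nodeSet q').Finite := by
    apply Set.Finite.subset
      (q'.atoms.biUnion fun A => ({endpointNode A false, endpointNode A true} :
        Finset (QNode Rel))).finite_toSet
    rintro n hn
    rcases hn with ⟨v, hv, rfl⟩ | ⟨A, hA, b, ⟨c, hc⟩, rfl⟩
    · obtain ⟨A, hA, hor⟩ := hv
      refine Finset.mem_coe.mpr (Finset.mem_biUnion.mpr ⟨A, hA, ?_⟩)
      simp only [Finset.mem_insert, Finset.mem_singleton]
      rcases hor with h1 | h1
      · exact Or.inl (endpointNode_eq_inl (show A.pos false = _ from h1)).symm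
      · exact Or.inr (endpointNode_eq_inl (show A.pos true = _ from h1)).symm
    · refine Finset.mem_coe.mpr (Finset.mem_biUnion.mpr ⟨A, hA, ?_⟩)
      simp only [Finset.mem_insert, Finset.mem_singleton]
      cases b
      · exact Or.inl (endpointNode_eq_inr hc).symm
      · exact Or.inr (endpointNode_eq_inr hc).symm
  have hrootT : rootNode q' ∈ hNfin.toFinset := hNfin.mem_toFinset.mpr (root_mem_nodeSet q')
  have hTcard : hNfin.toFinset.card = q'.atoms.card + 1 := by
    rw [← Set.ncard_eq_toFinset_card _ hNfin]
    exact hcard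
  have hS'card : (hNfin.toFinset.erase (rootNode q')).card = q'.atoms.card := by
    rw [Finset.card_erase_of_mem hrootT, hTcard]
    omega
  have hmemS' : ∀ n ∈ hNfin.toFinset.erase (rootNode q'),
      n ∈ nodeSet q' ∧ n ≠ rootNode q' := by
    intro n hn
    rw [Finset.mem_erase] at hn
    exact ⟨hNfin.mem_toFinset.mp hn.2, hn.1⟩
  have hsurj : ∀ A ∈ q'.atoms, ∃ n, (n ∈ nodeSet q' ∧ n ≠ rootNode q') ∧ pA n = A := by
    have hmaps : ∀ n (hn : n ∈ hNfin.toFinset.erase (rootNode q')), pA n ∈ q'.atoms :=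
      fun n hn => (hPspec n (hmemS' n hn).1 (hmemS' n hn).2).1
    have hinj : ∀ n₁ n₂ (h₁ : n₁ ∈ hNfin.toFinset.erase (rootNode q'))
        (h₂ : n₂ ∈ hNfin.toFinset.erase (rootNode q')), pA n₁ = pA n₂ → n₁ = n₂ := by
      intro n₁ n₂ h₁ h₂ hAB
      by_contra hne
      obtain ⟨hm1, hr1⟩ := hmemS' n₁ h₁
      obtain ⟨hm2, hr2⟩ := hmemS' n₂ h₂
      obtain ⟨-, -, hd1, hor1⟩ := hPspec n₁ hm1 hr1
      obtain ⟨-, -, hd2, hor2⟩ := hPspec n₂ hm2 hr2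
      rw [hAB] at hor1
      have hpp : pP n₁ = n₂ ∧ pP n₂ = n₁ := by
        rcases hor1 with ⟨e1, e2⟩ | ⟨e1, e2⟩ <;> rcases hor2 with ⟨f1, f2⟩ | ⟨f1, f2⟩
        · exact absurd (e1.trans f1.symm) hne
        · exact ⟨e2.trans f1.symm, f2.trans e1.symm⟩
        · exact ⟨e2.trans f1.symm, f2.trans e1.symm⟩
        · exact absurd (e1.trans f1.symm) hne
      rw [hpp.1] at hd1
      rw [hpp.2] at hd2
      omega
    intro A hA
    obtain ⟨n, hn, hnA⟩ := Finset.surj_on_of_inj_on_of_card_le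
      (s := hNfin.toFinset.erase (rootNode q')) (t := q'.atoms)
      (fun n _ => pA n) hmaps hinj (le_of_eq hS'card.symm) A hA
    exact ⟨n, hmemS' n hn, hnA.symm⟩
  -- the homomorphism
  let g : Term → Term := fun t =>
    match t with
    | Term.var v =>
        if _hv : Sum.inl v ∈ nodeSet q' then oTerm q enc (V (Sum.inl v)) else Term.var v
    | Term.con c => Term.con c
  have hgNode : ∀ n ∈ nodeSet q', g (nodeTerm n) = oTerm q enc (V n) := by
    intro n hn
    cases hterm : nodeTerm n with
    | var v =>
      have hn' : n = Sum.inl v := mem_nodeSet_var hn hterm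
      subst hn'
      show (if _hv : Sum.inl v ∈ nodeSet q' then oTerm q enc (V (Sum.inl v)) else Term.var v) =
        oTerm q enc (V (Sum.inl v))
      rw [dif_pos hn]
    | con c =>
      have hc : c ∈ q'.cons := mem_nodeSet_con hn hterm
      have hEnd : pathEnd q (V n) = Term.con c := by
        rw [(hInv n hn).2.1, hterm, hCons c hc]
      show Term.con c = oTerm q enc (V n)
      unfold oTerm
      rw [hEnd]
  refine ⟨g, ?_, fun c => rfl, ?_⟩
  · show (if _hv : Sum.inl q'.target ∈ nodeSet q' then
        oTerm q enc (V (Sum.inl q'.target)) else Term.var q'.target) = Term.var (enc [])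
    rw [dif_pos (show (Sum.inl q'.target : QNode Rel) ∈ nodeSet q' from root_mem_nodeSet q')]
    rw [show (Sum.inl q'.target : QNode Rel) = rootNode q' from rfl, hVroot]
    rfl
  · intro A hA
    obtain ⟨n, ⟨hn, hnr⟩, hpAn⟩ := hsurj A hA
    obtain ⟨hpA', hpN, hdp, hor⟩ := hPspec n hn hnr
    obtain ⟨hVpVal, hVpEnd, hVpLen⟩ := hInv (pP n) hpN
    obtain ⟨hVnVal, hVnEnd, hVnLen⟩ := hInv n hn
    have hdLe : dist n ≤ d := hdistLe n hn
    have hTrav : Traverses ((pA n).mapTerms h) (pathEnd q (V (pP n))) (h (nodeTerm n)) := by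
      rw [hVpEnd]; exact hTravGen n hn hnr
    have hspec := validAppend_spec hVpVal (hAtoms _ hpA') hTrav
    rw [← hVstep n hn hnr] at hspec
    rw [hpAn] at hspec hor
    rcases hor with ⟨h1, h2⟩ | ⟨h1, h2⟩
    · -- n is the source endpoint, parent the target endpoint
      have htn : nodeTerm n = A.src := by rw [h1, nodeTerm_endpointNode]; rfl
      have htp : nodeTerm (pP n) = A.tgt := by rw [h2, nodeTerm_endpointNode]; rfl
      have hgsrc : g A.src = oTerm q enc (V n) := by rw [← htn]; exact hgNode n hn
      have hgtgt : g A.tgt = oTerm q enc (V (pP n)) := by rw [← htp]; exact hgNode _ hpN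
      have hEn : pathEnd q (V n) = h A.src := by rw [hVnEnd, htn]
      have hEp : pathEnd q (V (pP n)) = h A.tgt := by rw [hVpEnd, htp]
      rcases hspec.2.2 with hx | hx
      · rw [htn] at hx
        refine ⟨V (pP n), A.mapTerms h, h A.src, ?_, ?_, Or.inr ⟨rfl, ?_, ?_⟩⟩
        · rw [← hx]; exact hspec.1
        · omega
        · exact hEp.symm
        · rw [hgsrc, hgtgt, ← hx]; rfl
      · rw [hEp] at hx
        have hlen := congrArg List.length hx
        simp only [List.length_append, List.length_cons, List.length_nil] at hlen
        refine ⟨V n, A.mapTerms h, h A.tgt, ?_, ?_, Or.inl ⟨?_, rfl, ?_⟩⟩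
        · rw [← hx]; exact hVpVal
        · omega
        · exact hEn.symm
        · rw [hgsrc, hgtgt, ← hx]; rfl
    · -- n is the target endpoint, parent the source endpoint
      have htn : nodeTerm n = A.tgt := by rw [h1, nodeTerm_endpointNode]; rfl
      have htp : nodeTerm (pP n) = A.src := by rw [h2, nodeTerm_endpointNode]; rfl
      have hgsrc : g A.src = oTerm q enc (V (pP n)) := by rw [← htp]; exact hgNode _ hpN
      have hgtgt : g A.tgt = oTerm q enc (V n) := by rw [← htn]; exact hgNode n hn
      have hEn : pathEnd q (V n) = h A.tgt := by rw [hVnEnd, htn]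
      have hEp : pathEnd q (V (pP n)) = h A.src := by rw [hVpEnd, htp]
      rcases hspec.2.2 with hx | hx
      · rw [htn] at hx
        refine ⟨V (pP n), A.mapTerms h, h A.tgt, ?_, ?_, Or.inl ⟨?_, rfl, ?_⟩⟩
        · rw [← hx]; exact hspec.1
        · omega
        · exact hEp.symm
        · rw [hgsrc, hgtgt, ← hx]; rfl
      · rw [hEp] at hx
        have hlen := congrArg List.length hx
        simp only [List.length_append, List.length_cons, List.length_nil] at hlen
        refine ⟨V n, A.mapTerms h, h A.src, ?_, ?_, Or.inr ⟨rfl, ?_, ?_⟩⟩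
        · rw [← hx]; exact hVpVal
        · omega
        · exact hEn.symm
        · rw [hgsrc, hgtgt, ← hx]; rfl

/-- Optimality of unravelings. Let `q(x)` be a CQ and `d ≥ 1`.
If `q'(x)` is a complete tree-like approximation of `q` of depth at most `d`,
then `q̃_d ⊆ q'`. -/
theorem unraveling_optimal {Rel : Type} [Fintype Rel] [DecidableEq Rel]
    (q q' : CQ Rel) (htgt : q'.target = q.target) (d : ℕ) (hd : 1 ≤ d)
    (htree : IsTreeLike q') (happrox : q.contained q') (hdep : HasDepthLE q' d)
    (enc : List (Atom Rel × Term) → Var) (qd : CQ Rel)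
    (hu : IsUnraveling q enc d qd) :
    qd.contained q' := by
  classical
  obtain ⟨-, hqdT, hqdA⟩ := hu
  -- bound the constants of q and q'
  obtain ⟨B1, hB1⟩ := cons_lt_bound q
  obtain ⟨B2, hB2⟩ := cons_lt_bound q'
  let Nb : ℕ := max B1 B2
  let ι : Var → Con := fun v => v + Nb
  -- the canonical database of q and the induced homomorphism h : q' → q
  have hqans : ι q.target ∈ q.answer (canonicalDB q ι) := by
    refine ⟨termToCon ι, fun c _ => rfl, rfl, fun A hA => ?_⟩
    exact Finset.mem_image_of_mem _ hA
  obtain ⟨ν, hνcons, hνtgt, hνatoms⟩ := happrox (canonicalDB q ι) hqans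
  let h : Term → Term := fun t =>
    if hv : ∃ v : Var, ι v = ν t then Term.var hv.choose else Term.con (ν t)
  have hrange : ∀ (w : Var) (t : Term), ι w = ν t → h t = Term.var w := by
    intro w t hw
    have hv : ∃ v : Var, ι v = ν t := ⟨w, hw⟩
    show (if hv : ∃ v : Var, ι v = ν t then Term.var hv.choose else Term.con (ν t)) =
      Term.var w
    rw [dif_pos hv]
    have hc := hv.choose_spec
    have heq : hv.choose = w := Nat.add_right_cancel (hc.trans hw.symm)
    rw [heq]
  have hnotrange : ∀ (t : Term) (c : Con), ν t = c → c < Nb → h t = Term.con c := by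
    intro t c hc hlt
    have hv : ¬ ∃ v : Var, ι v = ν t := by
      rintro ⟨v, hvv⟩
      rw [hc] at hvv
      have h2 : v + Nb = c := hvv
      exact absurd hlt (not_lt.mpr (h2 ▸ Nat.le_add_left Nb v))
    show (if hv : ∃ v : Var, ι v = ν t then Term.var hv.choose else Term.con (ν t)) =
      Term.con c
    rw [dif_neg hv, hc]
  have hTgt : h (Term.var q'.target) = Term.var q.target := hrange _ _ hνtgt.symm
  have hCons : ∀ c ∈ q'.cons, h (Term.con c) = Term.con c := fun c hc =>
    hnotrange _ _ (hνcons c hc) (lt_of_lt_of_le (hB2 c hc) (le_max_right B1 B2))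
  have hAtoms : ∀ A ∈ q'.atoms, A.mapTerms h ∈ q.atoms := by
    intro A hA
    have hf := hνatoms A hA
    rw [canonicalDB, Finset.mem_image] at hf
    obtain ⟨A0, hA0, heq⟩ := hf
    rw [Fact.mk.injEq] at heq
    obtain ⟨hrel, hsrc, htgt2⟩ := heq
    have key : ∀ t0 t : Term, t0 ∈ q.terms → termToCon ι t0 = ν t → h t = t0 := by
      rintro (v | c) t ht0 hEq
      · exact hrange v t hEq
      · exact hnotrange t c hEq.symm (lt_of_lt_of_le (hB1 c ht0) (le_max_left B1 B2))
    have h1 : h A.src = A0.src := key _ _ ⟨A0, hA0, Or.inl rfl⟩ hsrc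
    have h2 : h A.tgt = A0.tgt := key _ _ ⟨A0, hA0, Or.inr rfl⟩ htgt2
    have hEqA : A.mapTerms h = A0 := by
      show (⟨A.rel, h A.src, h A.tgt⟩ : Atom Rel) = A0
      rw [h1, h2, ← hrel]
    rw [hEqA]
    exact hA0
  -- the homomorphism into the unraveling
  obtain ⟨g, hg1, hg2, hg3⟩ := tree_hom q q' d enc h hTgt hCons hAtoms htree hdep
  have hqdmem : ∀ A ∈ q'.atoms, (⟨A.rel, g A.src, g A.tgt⟩ : Atom Rel) ∈ qd.atoms := by
    intro A hA
    have hm := hg3 A hA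
    rw [← hqdA] at hm
    exact hm
  -- conclude containment
  intro G a ha
  obtain ⟨μ, hμcons, hμtgt, hμatoms⟩ := ha
  refine ⟨fun t => μ (g t), ?_, ?_, ?_⟩
  · intro c hc
    show μ (g (Term.con c)) = c
    rw [hg2 c]
    apply hμcons
    obtain ⟨A, hA, hor⟩ := hc
    refine ⟨⟨A.rel, g A.src, g A.tgt⟩, hqdmem A hA, ?_⟩
    rcases hor with h1 | h1
    · exact Or.inl (by show g A.src = Term.con c; rw [h1, hg2])
    · exact Or.inr (by show g A.tgt = Term.con c; rw [h1, hg2])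
  · show μ (g (Term.var q'.target)) = a
    rw [hg1, ← hqdT]
    exact hμtgt
  · intro A hA
    exact hμatoms _ (hqdmem A hA)


end KGQuery
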